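/- arXiv:2109.09945 — 10 statements merged into one kernel-verified Lean document; each statement's English description precedes it below -/
import Mathlib

section
/- Let C₀, K₀, f, ω, k be real numbers with ω ≠ 0 and ω² ≠ 1. Set b∞ = K₀·sin f − cos f, and define the CCTWT dispersion function D(ω,k) = C₀·sin ω·(b∞ + cos(ω−k)) + (1/ω)·[2(cos k − cos ω)·b∞ + cos(2k−ω) − cos(k−2ω) + cos ω − cos k] + (1/ω²)·[C₀·sin ω·(cos f − cos(k−ω))], the CCS dispersion function D_C(ω,k) = C₀·sin ω + 2(cos k − cos ω)/ω − C₀·sin ω/ω², and the MCK dispersion function D_K(ω,k) = cos(ω−k) + b∞ + K₀/(ω²−1). Then D(ω,k) − D_C(ω,k)·D_K(ω,k) = (K₀/ω)·[ 2(cos ω − cos k)/(ω²−1) − C₀·sin ω·(1 − sin f)/ω ]. -/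
/-- **Dispersion function factorization** for the coupled-cavity traveling wave tube
(CCTWT) under the exact synchronism assumption χ = 1, ω₀ = 1. -/
theorem cctwt_dispersion_factorization
    (C₀ K₀ f ω k : ℝ) (hω : ω ≠ 0) (hω1 : ω ^ 2 ≠ 1) :
    let binf : ℝ := K₀ * Real.sin f - Real.cos f
    let D : ℝ := C₀ * Real.sin ω * (binf + Real.cos (ω - k))
      + (1 / ω) * (2 * (Real.cos k - Real.cos ω) * binf + Real.cos (2 * k - ω)
          - Real.cos (k - 2 * ω) + Real.cos ω - Real.cos k)
      + (1 / ω ^ 2) * (C₀ * Real.sin ω * (Real.cos f - Real.cos (k - ω)))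
    let DC : ℝ := C₀ * Real.sin ω + 2 * (Real.cos k - Real.cos ω) / ω
      - C₀ * Real.sin ω / ω ^ 2
    let DK : ℝ := Real.cos (ω - k) + binf + K₀ / (ω ^ 2 - 1)
    D - DC * DK = (K₀ / ω) * (2 * (Real.cos ω - Real.cos k) / (ω ^ 2 - 1)
      - C₀ * Real.sin ω * (1 - Real.sin f) / ω) := by
  intro binf D DC DK
  have h1 : ω ^ 2 - 1 ≠ 0 := sub_ne_zero.mpr hω1
  simp only [binf, D, DC, DK, Real.cos_sub, Real.sin_two_mul, Real.cos_two_mul,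
    two_mul, Real.cos_add, Real.sin_add]
  field_simp
  linear_combination (Real.cos k * (ω^3 - ω)) * Real.sin_sq_add_cos_sq ω
    - (Real.cos ω * (ω^3 - ω)) * Real.sin_sq_add_cos_sq k
end

section
/- Let C₀, K₀, f, ω be real numbers with ω ≠ 0 and ω² ≠ 1, and let s be a complex number. Set b∞ = K₀·sin f − cos f and b_f = K₀·(ω²/(ω²−1))·sin f − cos f. Define the CCTWT characteristic polynomial P(s) = s⁴ + p₃s³ + p₂s² + p₁s + e^{2iω}, where p₃ = 2e^{iω}·b∞ + C₀·((ω²−1)/ω)·sin ω − 2cos ω, p₂ = e^{iω}·[ 2b∞·(C₀·ω·sin ω − 2cos ω) + 2cos f·C₀·sin ω/ω + 2cos ω ], and p₁ = e^{2iω}·[ C₀·((ω²−1)/ω)·sin ω − 2cos ω ] + 2e^{iω}·b∞. Define the CCS characteristic polynomial P_C(s) = s² + [C₀·(ω − 1/ω)·sin ω − 2cos ω]·s + 1 and the MCK characteristic polynomial P_K(s) = s² + 2e^{iω}·b_f·s + e^{2iω}. Then P(s) − P_C(s)·P_K(s) = −2K₀·sin f·e^{iω}·s·(s² − 2cos ω·s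 + 1)/(ω²−1). -/
/-- **Characteristic polynomial factorization** for the coupled-cavity traveling wave tube
(CCTWT) under the exact synchronism assumption χ = 1, ω₀ = 1. -/
theorem cctwt_char_poly_factorization
    (C₀ K₀ f ω : ℝ) (hω : ω ≠ 0) (hω1 : ω ^ 2 ≠ 1) (s : ℂ) :
    let e : ℂ := Complex.exp (Complex.I * ω)
    let binf : ℂ := ((K₀ * Real.sin f - Real.cos f : ℝ) : ℂ)
    let bf : ℂ := ((K₀ * (ω ^ 2 / (ω ^ 2 - 1)) * Real.sin f - Real.cos f : ℝ) : ℂ)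
    let p₃ : ℂ := 2 * e * binf
      + ((C₀ * ((ω ^ 2 - 1) / ω) * Real.sin ω - 2 * Real.cos ω : ℝ) : ℂ)
    let p₂ : ℂ := e * ((2 * (K₀ * Real.sin f - Real.cos f)
        * (C₀ * ω * Real.sin ω - 2 * Real.cos ω)
        + 2 * Real.cos f * C₀ * Real.sin ω / ω + 2 * Real.cos ω : ℝ) : ℂ)
    let p₁ : ℂ := e ^ 2 * ((C₀ * ((ω ^ 2 - 1) / ω) * Real.sin ω - 2 * Real.cos ω : ℝ) : ℂ)
      + 2 * e * binf
    let P : ℂ := s ^ 4 + p₃ * s ^ 3 + p₂ * s ^ 2 + p₁ * s + e ^ 2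
    let PC : ℂ := s ^ 2 + ((C₀ * (ω - 1 / ω) * Real.sin ω - 2 * Real.cos ω : ℝ) : ℂ) * s + 1
    let PK : ℂ := s ^ 2 + 2 * e * bf * s + e ^ 2
    P - PC * PK
      = -2 * (K₀ : ℂ) * (Real.sin f : ℂ) * e * s
          * (s ^ 2 - 2 * (Real.cos ω : ℂ) * s + 1) / ((ω : ℂ) ^ 2 - 1) := by
  intro e binf bf p₃ p₂ p₁ P PC PK
  simp only [P, PC, PK, p₁, p₂, p₃, binf, bf, e]
  have hωc : (ω : ℂ) ≠ 0 := Complex.ofReal_ne_zero.mpr hω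
  have hω1c : (ω : ℂ) ^ 2 - 1 ≠ 0 := by
    intro h
    apply hω1
    have : ((ω ^ 2 - 1 : ℝ) : ℂ) = 0 := by push_cast; linear_combination h
    have := Complex.ofReal_eq_zero.mp this
    linarith
  have key : Complex.exp (Complex.I * (ω:ℂ)) ^ 2
      - 2 * Complex.exp (Complex.I * (ω:ℂ)) * Complex.cos (ω:ℂ) + 1 = 0 := by
    have h1 : Complex.exp (Complex.I * (ω:ℂ)) * Complex.exp (-(Complex.I * (ω:ℂ))) = 1 := by
      rw [← Complex.exp_add]; simp
    rw [Complex.cos]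
    have h2 : -(ω:ℂ) * Complex.I = -(Complex.I * (ω:ℂ)) := by ring
    have h3 : (ω:ℂ) * Complex.I = Complex.I * (ω:ℂ) := by ring
    rw [h2, h3]
    linear_combination -h1
  push_cast
  field_simp
  linear_combination (s^2 * (ω:ℂ) * (1 - (ω:ℂ)^2)) * key
end

section
/- Let b and ω be real numbers with b ≠ 0, let m be an integer, and let ε ∈ {1, −1}. Define the complex number κ as follows: if b² > 1, set κ = −((1 + sign b)/2)·π + ω + 2πm + ε·i·ln(|b| + √(b²−1)); if b² ≤ 1, set κ = −((1 + sign b)/2)·π + ω + 2πm + ε·arccos(|b|). Then the complex number S = exp(i·(κ − ω)) satisfies S² + 2b·S + 1 = 0. -/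
/-- exp of the common real phase prefactor. -/
lemma mck_prefactor (b : ℝ) (hb : b ≠ 0) (m : ℤ) :
    Complex.exp (Complex.I * ((-((1 + Real.sign b) / 2) * Real.pi
        + 2 * Real.pi * (m : ℝ) : ℝ) : ℂ)) = -(Real.sign b : ℂ) := by
  rcases hb.lt_or_gt with h | h
  · rw [Real.sign_of_neg h]
    have : Complex.I * ((-((1 + (-1:ℝ)) / 2) * Real.pi + 2 * Real.pi * (m : ℝ) : ℝ) : ℂ)
        = (m : ℂ) * (2 * Real.pi * Complex.I) := by
      push_cast
      ring
    rw [this, Complex.exp_int_mul_two_pi_mul_I]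
    norm_num
  · rw [Real.sign_of_pos h]
    have : Complex.I * ((-((1 + (1:ℝ)) / 2) * Real.pi + 2 * Real.pi * (m : ℝ) : ℝ) : ℂ)
        = (Real.pi : ℂ) * Complex.I + ((m - 1 : ℤ) : ℂ) * (2 * Real.pi * Complex.I) := by
      push_cast
      ring
    rw [this, Complex.exp_add, Complex.exp_pi_mul_I,
      Complex.exp_int_mul_two_pi_mul_I]
    norm_num

/-- **MCK dispersion relations**: the wavenumbers given by the explicit formulas produce,
via `S = exp (i (κ - ω))`, the roots of `S² + 2 b S + 1 = 0`. -/
theorem mck_dispersion_wavenumbers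
    (b ω : ℝ) (hb : b ≠ 0) (m : ℤ) (ε : ℝ) (hε : ε = 1 ∨ ε = -1) :
    let κ : ℂ :=
      if 1 < b ^ 2 then
        ((-((1 + Real.sign b) / 2) * Real.pi + ω + 2 * Real.pi * (m : ℝ) : ℝ) : ℂ)
          + (ε : ℂ) * Complex.I * ((Real.log (|b| + Real.sqrt (b ^ 2 - 1)) : ℝ) : ℂ)
      else
        ((-((1 + Real.sign b) / 2) * Real.pi + ω + 2 * Real.pi * (m : ℝ)
            + ε * Real.arccos |b| : ℝ) : ℂ)
    let S : ℂ := Complex.exp (Complex.I * (κ - (ω : ℂ)))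
    S ^ 2 + 2 * (b : ℂ) * S + 1 = 0 := by
  intro κ S
  set σ : ℝ := Real.sign b with hσdef
  have hσ : σ = 1 ∨ σ = -1 := by
    rcases hb.lt_or_gt with h | h
    · right; exact Real.sign_of_neg h
    · left; exact Real.sign_of_pos h
  have hσ2 : σ ^ 2 = 1 := by rcases hσ with h | h <;> rw [h] <;> norm_num
  have hε2 : ε ^ 2 = 1 := by rcases hε with h | h <;> rw [h] <;> norm_num
  have hbσ : σ * |b| = b := by
    rcases hb.lt_or_gt with h | h
    · rw [hσdef, Real.sign_of_neg h, abs_of_neg h]; ring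
    · rw [hσdef, Real.sign_of_pos h, abs_of_pos h]; ring
  have hbσ' : b * σ = |b| := by linear_combination (-σ) * hbσ + |b| * hσ2
  have hpre := mck_prefactor b hb m
  by_cases hb2 : 1 < b ^ 2
  · -- hyperbolic case
    set r : ℝ := |b| + Real.sqrt (b ^ 2 - 1) with hrdef
    have hsq : Real.sqrt (b ^ 2 - 1) ^ 2 = b ^ 2 - 1 := Real.sq_sqrt (by linarith)
    have habs : |b| ^ 2 = b ^ 2 := sq_abs b
    have hrpos : 0 < r := by
      have h1 : 0 < |b| := abs_pos.mpr hb
      have h2 : 0 ≤ Real.sqrt (b ^ 2 - 1) := Real.sqrt_nonneg _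
      linarith
    have hr : r ^ 2 - 2 * |b| * r + 1 = 0 := by
      rw [hrdef]; nlinarith [hsq, habs]
    have hexp : Real.exp (Real.log r) = r := Real.exp_log hrpos
    have hSval : S = ((-σ * Real.exp (-(ε * Real.log r)) : ℝ) : ℂ) := by
      show Complex.exp _ = _
      have hκ : κ = ((-((1 + σ) / 2) * Real.pi + ω + 2 * Real.pi * (m : ℝ) : ℝ) : ℂ)
          + (ε : ℂ) * Complex.I * ((Real.log r : ℝ) : ℂ) := by
        simp only [κ, if_pos hb2]; rfl
      have harg : Complex.I * (κ - (ω : ℂ))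
          = Complex.I * ((-((1 + σ) / 2) * Real.pi + 2 * Real.pi * (m : ℝ) : ℝ) : ℂ)
            + ((-(ε * Real.log r) : ℝ) : ℂ) := by
        rw [hκ]
        push_cast
        have : Complex.I * Complex.I = -1 := Complex.I_mul_I
        ring_nf
        rw [Complex.I_sq]
        ring
      rw [harg, Complex.exp_add, hpre, ← Complex.ofReal_exp]
      push_cast
      ring
    rcases hε with h | h
    · -- ε = 1 : S = -σ / r
      have hval : Real.exp (-(ε * Real.log r)) = r⁻¹ := by
        rw [h, one_mul, Real.exp_neg, hexp]
      rw [hSval, hval]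
      have key : (-σ * r⁻¹) ^ 2 + 2 * b * (-σ * r⁻¹) + 1 = 0 := by
        have hrne : r ≠ 0 := ne_of_gt hrpos
        have hz : σ ^ 2 - 2 * (b * σ) * r + r ^ 2 = 0 := by
          rw [hσ2, hbσ']; linarith [hr]
        calc (-σ * r⁻¹) ^ 2 + 2 * b * (-σ * r⁻¹) + 1
            = (σ ^ 2 - 2 * (b * σ) * r + r ^ 2) * (r⁻¹) ^ 2 := by
              field_simp; ring
          _ = 0 := by rw [hz]; ring
      calc ((-σ * r⁻¹ : ℝ) : ℂ) ^ 2 + 2 * (b : ℂ) * ((-σ * r⁻¹ : ℝ) : ℂ) + 1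
          = (((-σ * r⁻¹) ^ 2 + 2 * b * (-σ * r⁻¹) + 1 : ℝ) : ℂ) := by push_cast; ring
        _ = 0 := by rw [key]; norm_num
    · -- ε = -1 : S = -σ * r
      have hval : Real.exp (-(ε * Real.log r)) = r := by
        rw [h]; simp [hexp]
      rw [hSval, hval]
      have key : (-σ * r) ^ 2 + 2 * b * (-σ * r) + 1 = 0 := by
        linear_combination r ^ 2 * hσ2 + (-2 * r) * hbσ' + hr
      calc ((-σ * r : ℝ) : ℂ) ^ 2 + 2 * (b : ℂ) * ((-σ * r : ℝ) : ℂ) + 1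
          = (((-σ * r) ^ 2 + 2 * b * (-σ * r) + 1 : ℝ) : ℂ) := by push_cast; ring
        _ = 0 := by rw [key]; norm_num
  · -- oscillatory case
    have hb2' : b ^ 2 ≤ 1 := le_of_not_gt hb2
    have habs1 : |b| ≤ 1 := by nlinarith [sq_abs b, abs_nonneg b]
    set θ : ℝ := Real.arccos |b| with hθdef
    have hcos : Real.cos θ = |b| := Real.cos_arccos (by linarith [abs_nonneg b]) habs1
    have hsin : Real.sin θ = Real.sqrt (1 - b ^ 2) := by
      rw [hθdef, Real.sin_arccos, sq_abs]
    have hcosε : Real.cos (ε * θ) = |b| := by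
      rcases hε with h | h <;> rw [h] <;> simp [hcos]
    have hsinε : Real.sin (ε * θ) = ε * Real.sqrt (1 - b ^ 2) := by
      rcases hε with h | h <;> rw [h] <;> simp [hsin]
    set c : ℝ := σ * ε * Real.sqrt (1 - b ^ 2) with hcdef
    have hc : c ^ 2 = 1 - b ^ 2 := by
      have hs := Real.sq_sqrt (by linarith : (0:ℝ) ≤ 1 - b ^ 2)
      rw [hcdef]
      linear_combination (ε ^ 2 * Real.sqrt (1 - b ^ 2) ^ 2) * hσ2
        + (Real.sqrt (1 - b ^ 2) ^ 2) * hε2 + hs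
    have hSval : S = -(b : ℂ) - (c : ℂ) * Complex.I := by
      show Complex.exp _ = _
      have hκ : κ = ((-((1 + σ) / 2) * Real.pi + ω + 2 * Real.pi * (m : ℝ)
          + ε * θ : ℝ) : ℂ) := by
        simp only [κ, if_neg hb2]; rfl
      have harg : Complex.I * (κ - (ω : ℂ))
          = Complex.I * ((-((1 + σ) / 2) * Real.pi + 2 * Real.pi * (m : ℝ) : ℝ) : ℂ)
            + ((ε * θ : ℝ) : ℂ) * Complex.I := by
        rw [hκ]; push_cast; ring
      rw [harg, Complex.exp_add, hpre, Complex.exp_mul_I,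
        ← Complex.ofReal_cos, ← Complex.ofReal_sin, hcosε, hsinε]
      have hbc : (σ : ℂ) * ((|b| : ℝ) : ℂ) = (b : ℂ) := by
        exact_mod_cast congrArg (Complex.ofReal) hbσ
      have hccast : (c : ℂ) = (σ : ℂ) * (ε : ℂ) * ((Real.sqrt (1 - b ^ 2) : ℝ) : ℂ) := by
        rw [hcdef]; push_cast; ring
      rw [hccast]
      push_cast
      linear_combination (-1 : ℂ) * hbc
    rw [hSval]
    have hcC : (c : ℂ) ^ 2 = 1 - (b : ℂ) ^ 2 := by exact_mod_cast congrArg Complex.ofReal hc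
    linear_combination Complex.I ^ 2 * hcC + (1 - (b:ℂ) ^ 2) * Complex.I_sq
end

section
/- Let ω, f, b_f be real numbers with f ≠ 0 and sin f ≠ 0, and write sinc f = sin f / f. Let 𝒯_K be the 2×2 complex matrix 𝒯_K = e^{iω}·[[cos f − i·ω·sinc f, sinc f], [ω²·sinc f + 2i·ω·(cos f + b_f) − (2b_f·cos f + cos²f + 1)/sinc f, i·ω·sinc f − cos f − 2b_f]]. Then for every complex number s, det(𝒯_K − s·𝟙) = s² + 2b_f·e^{iω}·s + e^{2iω}. In particular det 𝒯_K = e^{2iω} and trace 𝒯_K = −2b_f·e^{iω}. -/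
open Matrix

/-- The characteristic polynomial of the MCK monodromy matrix:
`det (𝒯_K - s 𝟙) = s² + 2 b_f e^{iω} s + e^{2iω}`. -/
theorem mck_monodromy_char_poly
    (ω f b_f : ℝ) (hf : f ≠ 0) (hsf : Real.sin f ≠ 0) :
    let sc : ℂ := ((Real.sin f / f : ℝ) : ℂ)
    let e : ℂ := Complex.exp (Complex.I * ω)
    let T : Matrix (Fin 2) (Fin 2) ℂ :=
      e • !![(Real.cos f : ℂ) - Complex.I * (ω : ℂ) * sc, sc;
             (ω : ℂ) ^ 2 * sc + 2 * Complex.I * (ω : ℂ) * ((Real.cos f : ℂ) + (b_f : ℂ))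
               - (2 * (b_f : ℂ) * (Real.cos f : ℂ) + (Real.cos f : ℂ) ^ 2 + 1) / sc,
             Complex.I * (ω : ℂ) * sc - (Real.cos f : ℂ) - 2 * (b_f : ℂ)]
    (∀ s : ℂ, (T - s • (1 : Matrix (Fin 2) (Fin 2) ℂ)).det
        = s ^ 2 + 2 * (b_f : ℂ) * e * s + e ^ 2)
      ∧ T.det = e ^ 2 ∧ T.trace = -2 * (b_f : ℂ) * e := by
  intro sc e T
  have hsc : sc ≠ 0 := by
    simp only [sc, ne_eq, Complex.ofReal_eq_zero]
    exact div_ne_zero hsf hf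
  have hI : Complex.I ^ 2 = -1 := Complex.I_sq
  refine ⟨fun s => ?_, ?_, ?_⟩ <;>
    simp only [T, Matrix.det_fin_two, Matrix.trace_fin_two, Matrix.sub_apply,
      Matrix.smul_apply, Matrix.one_apply, Matrix.cons_val_zero, Matrix.cons_val_one,
      Matrix.head_cons, Matrix.head_fin_const, Matrix.cons_val', Matrix.empty_val',
      Matrix.cons_val_fin_one, smul_eq_mul, if_true, if_neg (by decide : (0:Fin 2) ≠ 1),
      if_neg (by decide : (1:Fin 2) ≠ 0), mul_one, mul_zero, sub_zero, Matrix.of_apply]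
  · field_simp
    linear_combination (-(e^2*(ω:ℂ)^2*sc^2)) * hI
  · field_simp
    linear_combination (-(e^2*(ω:ℂ)^2*sc^2)) * hI
  · norm_num; ring
end

section
/- Let ω, C₀ be real numbers with ω ≠ 0. Let 𝒯_C be the 2×2 complex matrix 𝒯_C = [[cos ω, sin ω/ω], [(1−ω²)·C₀·cos ω − ω·sin ω, cos ω − C₀·(ω − 1/ω)·sin ω]], and define the CCS instability parameter W_C(ω) = (C₀/2)·(ω − 1/ω)·sin ω − cos ω. Then for every complex number s, det(𝒯_C − s·𝟙) = s² + 2·W_C(ω)·s + 1. In particular det 𝒯_C = 1 and trace 𝒯_C = −2·W_C(ω). -/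
open Matrix

/-- The characteristic polynomial of the CCS monodromy matrix:
`det (𝒯_C - s 𝟙) = s² + 2 W_C(ω) s + 1`. -/
theorem ccs_monodromy_char_poly
    (ω C₀ : ℝ) (hω : ω ≠ 0) :
    let T : Matrix (Fin 2) (Fin 2) ℂ :=
      !![(Real.cos ω : ℂ), ((Real.sin ω / ω : ℝ) : ℂ);
         (((1 - ω ^ 2) * C₀ * Real.cos ω - ω * Real.sin ω : ℝ) : ℂ),
         ((Real.cos ω - C₀ * (ω - 1 / ω) * Real.sin ω : ℝ) : ℂ)]
    let W : ℝ := C₀ / 2 * (ω - 1 / ω) * Real.sin ω - Real.cos ω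
    (∀ s : ℂ, (T - s • (1 : Matrix (Fin 2) (Fin 2) ℂ)).det
        = s ^ 2 + 2 * (W : ℂ) * s + 1)
      ∧ T.det = 1 ∧ T.trace = -2 * (W : ℂ) := by
  intro T W
  have hωc : (ω : ℂ) ≠ 0 := by exact_mod_cast hω
  have hpy : (Real.sin ω : ℂ) ^ 2 + (Real.cos ω : ℂ) ^ 2 = 1 := by
    exact_mod_cast congrArg Complex.ofReal (Real.sin_sq_add_cos_sq ω)
  have hC : Complex.sin ω ^ 2 + Complex.cos ω ^ 2 = 1 := Complex.sin_sq_add_cos_sq _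
  refine ⟨fun s => ?_, ?_, ?_⟩
  · simp only [T, W, Matrix.det_fin_two, Matrix.sub_apply, Matrix.smul_apply,
      Matrix.one_apply, Matrix.cons_val', Matrix.cons_val_zero, Matrix.cons_val_one,
      Matrix.head_cons, Matrix.head_fin_const, Matrix.empty_val',
      Matrix.cons_val_fin_one, smul_eq_mul, Matrix.of_apply]
    push_cast
    field_simp
    linear_combination (ω:ℂ) * hC 
  · simp only [T, W, Matrix.det_fin_two_of]
    push_cast
    field_simp
    linear_combination (ω:ℂ) * hC 
  · simp only [T, W, Matrix.trace_fin_two_of]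
    push_cast
    field_simp
    ring
end

section
/- Let ω, f be real numbers with f ≠ 0. Let 𝒯_B be the 2×2 complex matrix 𝒯_B = (e^{iω}/f)·[[f·cos f − i·ω·sin f, sin f], [(ω² − f²)·sin f, f·cos f + i·ω·sin f]]. Then for every complex number s, det(𝒯_B − s·𝟙) = s² − 2·cos f·e^{iω}·s + e^{2iω}. In particular det 𝒯_B = e^{2iω} and trace 𝒯_B = 2·cos f·e^{iω}. -/
open Matrix

/-- The characteristic polynomial of the decoupled e-beam monodromy matrix:
`det (𝒯_B - s 𝟙) = s² - 2 cos f · e^{iω} s + e^{2iω}`. -/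
theorem ebeam_monodromy_char_poly
    (ω f : ℝ) (hf : f ≠ 0) :
    let e : ℂ := Complex.exp (Complex.I * ω)
    let T : Matrix (Fin 2) (Fin 2) ℂ :=
      (e / (f : ℂ)) • !![(f : ℂ) * (Real.cos f : ℂ) - Complex.I * (ω : ℂ) * (Real.sin f : ℂ),
             (Real.sin f : ℂ);
             ((ω : ℂ) ^ 2 - (f : ℂ) ^ 2) * (Real.sin f : ℂ),
             (f : ℂ) * (Real.cos f : ℂ) + Complex.I * (ω : ℂ) * (Real.sin f : ℂ)]
    (∀ s : ℂ, (T - s • (1 : Matrix (Fin 2) (Fin 2) ℂ)).det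
        = s ^ 2 - 2 * (Real.cos f : ℂ) * e * s + e ^ 2)
      ∧ T.det = e ^ 2 ∧ T.trace = 2 * (Real.cos f : ℂ) * e := by
  intro e T
  have hfc : (f : ℂ) ≠ 0 := by exact_mod_cast hf
  have hpyth : (Real.sin f : ℂ) ^ 2 + (Real.cos f : ℂ) ^ 2 = 1 := by
    exact_mod_cast congrArg (Complex.ofReal) (Real.sin_sq_add_cos_sq f)
  have key : ∀ s : ℂ, (T - s • (1 : Matrix (Fin 2) (Fin 2) ℂ)).det
      = s ^ 2 - 2 * (Real.cos f : ℂ) * e * s + e ^ 2 := by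
    intro s
    rw [Matrix.det_fin_two]
    simp only [T, Matrix.sub_apply, Matrix.smul_apply, Matrix.one_apply, Matrix.cons_val_zero,
      Matrix.cons_val_one, Matrix.head_cons, Matrix.head_fin_const, smul_eq_mul, Matrix.of_apply, if_true, one_ne_zero, zero_ne_one,
      if_false, Complex.ofReal_sin, Complex.ofReal_cos]
    field_simp
    linear_combination (e ^ 2 * (f : ℂ) ^ 2) * Complex.sin_sq_add_cos_sq (f : ℂ)
      + (-(e ^ 2 * (ω : ℂ) ^ 2 * Complex.sin (f : ℂ) ^ 2)) * Complex.I_sq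
  refine ⟨key, ?_, ?_⟩
  · have := key 0
    simpa using this
  · rw [Matrix.trace_fin_two]
    simp only [T, Matrix.smul_apply, Matrix.cons_val_zero, Matrix.cons_val_one, Matrix.head_cons,
      Matrix.head_fin_const, smul_eq_mul, Matrix.of_apply]
    field_simp
    ring
end

section
/- Let ω, f, z be real numbers with f ≠ 0, and let 𝒞_B be the 2×2 complex matrix [[0, 1], [ω² − f², 2iω]]. Then the matrix exponential satisfies exp(z·𝒞_B) = (e^{iωz}/f)·[[f·cos(fz) − i·ω·sin(fz), sin(fz)], [(ω² − f²)·sin(fz), f·cos(fz) + i·ω·sin(fz)]]. -/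
open Matrix

/-- The matrix exponential of the e-beam companion matrix is the fundamental matrix
solution of the first-order system associated with the e-beam equation. -/
theorem ebeam_companion_matrix_exp
    (ω f z : ℝ) (hf : f ≠ 0) :
    let CB : Matrix (Fin 2) (Fin 2) ℂ :=
      !![0, 1; (ω : ℂ) ^ 2 - (f : ℂ) ^ 2, 2 * Complex.I * (ω : ℂ)]
    NormedSpace.exp ((z : ℂ) • CB)
      = (Complex.exp (Complex.I * ω * z) / (f : ℂ)) •
        !![(f : ℂ) * (Real.cos (f * z) : ℂ)
             - Complex.I * (ω : ℂ) * (Real.sin (f * z) : ℂ),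
           (Real.sin (f * z) : ℂ);
           ((ω : ℂ) ^ 2 - (f : ℂ) ^ 2) * (Real.sin (f * z) : ℂ),
           (f : ℂ) * (Real.cos (f * z) : ℂ)
             + Complex.I * (ω : ℂ) * (Real.sin (f * z) : ℂ)] := by
  intro CB
  have hfC : (f : ℂ) ≠ 0 := by exact_mod_cast hf
  set U : Matrix (Fin 2) (Fin 2) ℂ :=
    !![1, 1; Complex.I * ((ω : ℂ) + f), Complex.I * ((ω : ℂ) - f)] with hUdef
  have hdet : U.det = -2 * Complex.I * f := by
    simp [hUdef, Matrix.det_fin_two_of]; ring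
  have hdetU : IsUnit U.det := by
    rw [hdet]; exact (by simp [Complex.I_ne_zero, hfC] : (-2 * Complex.I * (f:ℂ)) ≠ 0).isUnit
  have hU : IsUnit U := (Matrix.isUnit_iff_isUnit_det _).mpr hdetU
  set d : Fin 2 → ℂ :=
    ![Complex.I * ((ω : ℂ) + f) * z, Complex.I * ((ω : ℂ) - f) * z] with hddef
  have hCU : ((z : ℂ) • CB) * U = U * Matrix.diagonal d := by
    ext i j
    fin_cases i <;> fin_cases j <;>
      simp [CB, hUdef, hddef, Matrix.mul_apply, Fin.sum_univ_two, Matrix.diagonal] <;>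
      ring_nf <;> simp [Complex.I_sq] <;> ring
  have hconj : (z : ℂ) • CB = U * Matrix.diagonal d * U⁻¹ := by
    calc (z : ℂ) • CB = ((z : ℂ) • CB) * (U * U⁻¹) := by
          rw [Matrix.mul_nonsing_inv U hdetU, mul_one]
      _ = (((z : ℂ) • CB) * U) * U⁻¹ := by rw [mul_assoc]
      _ = U * Matrix.diagonal d * U⁻¹ := by rw [hCU]
  rw [hconj, Matrix.exp_conj U _ hU, Matrix.exp_diagonal]
  set R : Matrix (Fin 2) (Fin 2) ℂ :=
    (Complex.exp (Complex.I * ω * z) / (f : ℂ)) •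
        !![(f : ℂ) * (Real.cos (f * z) : ℂ)
             - Complex.I * (ω : ℂ) * (Real.sin (f * z) : ℂ),
           (Real.sin (f * z) : ℂ);
           ((ω : ℂ) ^ 2 - (f : ℂ) ^ 2) * (Real.sin (f * z) : ℂ),
           (f : ℂ) * (Real.cos (f * z) : ℂ)
             + Complex.I * (ω : ℂ) * (Real.sin (f * z) : ℂ)] with hRdef
  have hRU : R * U = U * Matrix.diagonal (NormedSpace.exp d) := by
    have key : ∀ x : ℂ, NormedSpace.exp x = Complex.exp x := fun x => by
      rw [Complex.exp_eq_exp_ℂ]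
    have e0 : NormedSpace.exp (d 0) = Complex.exp (Complex.I * ω * z) *
        (Complex.cos (f * z) + Complex.sin (f * z) * Complex.I) := by
      rw [key, show d 0 = Complex.I * ω * z + (↑f * ↑z) * Complex.I by
        simp [hddef]; ring, Complex.exp_add, Complex.exp_mul_I]
    have e1 : NormedSpace.exp (d 1) = Complex.exp (Complex.I * ω * z) *
        (Complex.cos (f * z) - Complex.sin (f * z) * Complex.I) := by
      rw [key, show d 1 = Complex.I * ω * z + (-(↑f * ↑z)) * Complex.I by
        simp [hddef]; ring, Complex.exp_add, Complex.exp_mul_I, Complex.cos_neg,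
        Complex.sin_neg]
      ring
    have hc : ((Real.cos (f * z) : ℝ) : ℂ) = Complex.cos (↑f * ↑z) := by
      push_cast [Complex.ofReal_cos]; ring_nf
    have hs : ((Real.sin (f * z) : ℝ) : ℂ) = Complex.sin (↑f * ↑z) := by
      push_cast [Complex.ofReal_sin]; ring_nf
    ext i j
    fin_cases i <;> fin_cases j <;>
      simp [hRdef, hUdef, Matrix.mul_apply, Fin.sum_univ_two, Matrix.diagonal,
        e0, e1, hc, hs] <;>
      field_simp <;> ring_nf <;> simp [Complex.I_sq] <;> ring_nf
  calc U * Matrix.diagonal (NormedSpace.exp d) * U⁻¹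
      = (R * U) * U⁻¹ := by rw [hRU]
    _ = R * (U * U⁻¹) := by rw [mul_assoc]
    _ = R := by rw [Matrix.mul_nonsing_inv U hdetU, mul_one]
end

section
/- Let m, ν ≥ 1 and let A₀, A₁, …, A_ν be m×m complex matrices; set A(s) = Σ_{j=0}^{ν} A_j·s^j. Let B be the (mν)×(mν) block-diagonal matrix diag(𝟙, …, 𝟙, A_ν) and 𝖠 the (mν)×(mν) block companion matrix with identity superdiagonal blocks and last block row (−A₀, −A₁, …, −A_{ν−1}). Then for every s₀ ∈ ℂ, the dimension of the kernel of the linear map given by the matrix s₀·B − 𝖠 on ℂ^{mν} equals the dimension of the kernel of the linear map given by the matrix A(s₀) on ℂ^m; that is, the geometric multiplicities of the eigenvalue s₀ for the pencil sB − 𝖠 and for the matrix polynomial A(s) coincide. -/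
open Matrix


namespace CompanionAux

variable {m ν : ℕ}

def Bm (A : Fin (ν + 1) → Matrix (Fin m) (Fin m) ℂ) :
    Matrix (Fin ν × Fin m) (Fin ν × Fin m) ℂ := Matrix.of fun p q =>
  if p.1 = q.1 then
    (if (p.1 : ℕ) = ν - 1 then A (Fin.last ν) p.2 q.2
     else (1 : Matrix (Fin m) (Fin m) ℂ) p.2 q.2)
  else 0

def Cm (A : Fin (ν + 1) → Matrix (Fin m) (Fin m) ℂ) :
    Matrix (Fin ν × Fin m) (Fin ν × Fin m) ℂ := Matrix.of fun p q =>
  if (p.1 : ℕ) = ν - 1 then -(A (Fin.castSucc q.1) p.2 q.2)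
  else if (q.1 : ℕ) = (p.1 : ℕ) + 1 then (1 : Matrix (Fin m) (Fin m) ℂ) p.2 q.2
  else 0

variable (A : Fin (ν + 1) → Matrix (Fin m) (Fin m) ℂ) (s₀ : ℂ)

lemma row1 (x : Fin ν × Fin m → ℂ) (i : Fin ν) (hi : (i:ℕ) ≠ ν - 1) (k : Fin m) :
    ((s₀ • Bm A - Cm A).mulVec x) (i, k)
      = s₀ * x (i, k) - x (⟨(i:ℕ)+1, by omega⟩, k) := by
  have hlt : (i:ℕ) + 1 < ν := by omega
  simp only [mulVec, dotProduct, Fintype.sum_prod_type, Matrix.sub_apply, Matrix.smul_apply, Bm, Cm, of_apply,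
    smul_eq_mul, hi, if_false]
  have hc : ∀ j : Fin ν, ((j:ℕ) = (i:ℕ) + 1) = (j = ⟨(i:ℕ)+1, hlt⟩) := by
    intro j; simp [Fin.ext_iff]
  simp only [hc, one_apply, sub_mul, Finset.sum_sub_distrib, ite_mul, zero_mul, mul_ite,
    mul_zero, mul_one, Finset.sum_ite_eq, Finset.sum_ite_eq', Finset.mem_univ, if_true]
  simp [Finset.sum_ite_eq]

lemma row2 (x : Fin ν × Fin m → ℂ) (i : Fin ν) (hi : (i:ℕ) = ν - 1) (k : Fin m) :
    ((s₀ • Bm A - Cm A).mulVec x) (i, k)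
      = s₀ * ∑ l, A (Fin.last ν) k l * x (i, l)
        + ∑ j : Fin ν, ∑ l, A (Fin.castSucc j) k l * x (j, l) := by
  simp only [mulVec, dotProduct, Fintype.sum_prod_type, Matrix.sub_apply, Matrix.smul_apply, Bm, Cm, of_apply,
    smul_eq_mul, hi, if_true, ite_mul, zero_mul, sub_neg_eq_add, sub_mul, neg_mul,
    Finset.sum_add_distrib, Finset.sum_sub_distrib, Finset.mul_sum]
  rw [Finset.sum_comm]
  simp only [add_mul, ite_mul, zero_mul, mul_ite, mul_zero, Finset.sum_add_distrib,
    Finset.sum_ite_eq, Finset.mem_univ, if_true, mul_assoc]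
  congr 1
  rw [Finset.sum_comm]

theorem aux (hm : 1 ≤ m) (hν : 1 ≤ ν) :
    Module.finrank ℂ (LinearMap.ker (s₀ • Bm A - Cm A).mulVecLin)
      = Module.finrank ℂ
          (LinearMap.ker (∑ j : Fin (ν + 1), s₀ ^ (j : ℕ) • A j).mulVecLin) := by
  set M := s₀ • Bm A - Cm A with hMdef
  set Ap := ∑ j : Fin (ν + 1), s₀ ^ (j : ℕ) • A j with hApdef
  have hν0 : (0 : ℕ) < ν := hν
  -- Apoly mulVec formula
  have hAp : ∀ (y : Fin m → ℂ) (k : Fin m),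
      Ap.mulVec y k = ∑ j : Fin (ν + 1), s₀ ^ (j : ℕ) * ∑ l, A j k l * y l := by
    intro y k
    simp only [hApdef, mulVec, dotProduct, Matrix.sum_apply, Matrix.smul_apply, smul_eq_mul,
      Finset.sum_mul, Finset.mul_sum, mul_assoc]
    rw [Finset.sum_comm]
  -- kernel vectors of the pencil are Vandermonde-structured
  have hprop : ∀ x, M.mulVec x = 0 → ∀ (i : Fin ν) (k : Fin m),
      x (i, k) = s₀ ^ (i : ℕ) * x (⟨0, hν0⟩, k) := by
    intro x hx
    have key : ∀ n (hn : n < ν) (k : Fin m),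
        x (⟨n, hn⟩, k) = s₀ ^ n * x (⟨0, hν0⟩, k) := by
      intro n
      induction n with
      | zero => intro hn k; simp
      | succ n ih =>
        intro hn k
        have hn' : n < ν := by omega
        have hne : ((⟨n, hn'⟩ : Fin ν) : ℕ) ≠ ν - 1 := by simp; omega
        have h0 : ((s₀ • Bm A - Cm A).mulVec x) (⟨n, hn'⟩, k) = 0 := by
          rw [← hMdef, hx]; rfl
        rw [row1 A s₀ x ⟨n, hn'⟩ hne k] at h0
        have : x (⟨n+1, hn⟩, k) = s₀ * x (⟨n, hn'⟩, k) := by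
          have := sub_eq_zero.mp h0
          exact this.symm
        rw [this, ih hn' k, pow_succ]
        ring
    intro i k
    have := key (i : ℕ) i.isLt k
    simpa using this
  -- direction 1: x in ker pencil → x₀ in ker Apoly
  have hdir1 : ∀ x, M.mulVec x = 0 →
      Ap.mulVec (fun k => x (⟨0, hν0⟩, k)) = 0 := by
    intro x hx
    funext k
    have hlast : ((⟨ν - 1, by omega⟩ : Fin ν) : ℕ) = ν - 1 := rfl
    have h0 : ((s₀ • Bm A - Cm A).mulVec x) (⟨ν - 1, by omega⟩, k) = 0 := by
      rw [← hMdef, hx]; rfl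
    rw [row2 A s₀ x _ hlast k] at h0
    rw [hAp]
    rw [Fin.sum_univ_castSucc]
    have e1 : ∀ j : Fin ν, s₀ ^ ((Fin.castSucc j : Fin (ν+1)) : ℕ)
        * ∑ l, A (Fin.castSucc j) k l * (x (⟨0, hν0⟩, l))
        = ∑ l, A (Fin.castSucc j) k l * x (j, l) := by
      intro j
      rw [Finset.mul_sum]
      refine Finset.sum_congr rfl fun l _ => ?_
      rw [hprop x hx j l]
      simp only [Fin.coe_castSucc]
      ring
    have e2 : s₀ ^ ((Fin.last ν : Fin (ν+1)) : ℕ)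
        * ∑ l, A (Fin.last ν) k l * (x (⟨0, hν0⟩, l))
        = s₀ * ∑ l, A (Fin.last ν) k l * x (⟨ν - 1, by omega⟩, l) := by
      rw [Finset.mul_sum, Finset.mul_sum]
      refine Finset.sum_congr rfl fun l _ => ?_
      rw [hprop x hx ⟨ν - 1, by omega⟩ l]
      have : (Fin.last ν : ℕ) = (ν - 1) + 1 := by simp; omega
      rw [this, pow_succ]
      ring
    simp only [e1, e2]
    rw [Pi.zero_apply, ← h0]
    ring
  -- direction 2: y in ker Apoly → Vandermonde lift in ker pencil
  have hdir2 : ∀ y : Fin m → ℂ, Ap.mulVec y = 0 →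
      M.mulVec (fun p => s₀ ^ (p.1 : ℕ) * y p.2) = 0 := by
    intro y hy
    funext p
    obtain ⟨i, k⟩ := p
    by_cases hi : (i : ℕ) = ν - 1
    · rw [hMdef, row2 A s₀ _ i hi k]
      have hA0 : Ap.mulVec y k = 0 := by rw [hy]; rfl
      rw [hAp] at hA0
      rw [Fin.sum_univ_castSucc] at hA0
      have e1 : ∀ j : Fin ν, ∑ l, A (Fin.castSucc j) k l * (s₀ ^ ((j : Fin ν) : ℕ) * y l)
          = s₀ ^ ((Fin.castSucc j : Fin (ν+1)) : ℕ) * ∑ l, A (Fin.castSucc j) k l * y l := by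
        intro j
        rw [Finset.mul_sum]
        refine Finset.sum_congr rfl fun l _ => ?_
        simp only [Fin.coe_castSucc]
        ring
      have e2 : s₀ * ∑ l, A (Fin.last ν) k l * (s₀ ^ (i : ℕ) * y l)
          = s₀ ^ ((Fin.last ν : Fin (ν+1)) : ℕ) * ∑ l, A (Fin.last ν) k l * y l := by
        rw [Finset.mul_sum, Finset.mul_sum]
        refine Finset.sum_congr rfl fun l _ => ?_
        have : (Fin.last ν : ℕ) = (ν - 1) + 1 := by simp; omega
        rw [this, hi, pow_succ]
        ring
      simp only [e1, e2]
      rw [Pi.zero_apply, ← hA0]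
      ring
    · rw [hMdef, row1 A s₀ _ i hi k]
      show s₀ * (s₀ ^ (i:ℕ) * y k) - s₀ ^ ((i:ℕ)+1) * y k = (0 : Fin ν × Fin m → ℂ) (i, k)
      rw [pow_succ]
      simp only [Pi.zero_apply]
      ring
  -- build the linear equivalence between kernels
  let π : (Fin ν × Fin m → ℂ) →ₗ[ℂ] (Fin m → ℂ) :=
    LinearMap.funLeft ℂ ℂ (fun k : Fin m => ((⟨0, hν0⟩ : Fin ν), k))
  let ι : (Fin m → ℂ) →ₗ[ℂ] (Fin ν × Fin m → ℂ) :=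
    { toFun := fun y p => s₀ ^ (p.1 : ℕ) * y p.2
      map_add' := by intro a b; funext p; simp; ring
      map_smul' := by intro c a; funext p; simp; ring }
  have hFmem : ∀ x ∈ LinearMap.ker M.mulVecLin, π x ∈ LinearMap.ker Ap.mulVecLin := by
    intro x hx
    rw [LinearMap.mem_ker] at hx ⊢
    rw [Matrix.mulVecLin_apply] at hx ⊢
    exact hdir1 x hx
  have hGmem : ∀ y ∈ LinearMap.ker Ap.mulVecLin, ι y ∈ LinearMap.ker M.mulVecLin := by
    intro y hy
    rw [LinearMap.mem_ker] at hy ⊢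
    rw [Matrix.mulVecLin_apply] at hy ⊢
    exact hdir2 y hy
  let F := π.restrict hFmem
  let G := ι.restrict hGmem
  have h1 : F.comp G = LinearMap.id := by
    ext ⟨y, hy⟩ k
    simp [F, G, π, ι, LinearMap.restrict_apply, LinearMap.funLeft]
  have h2 : G.comp F = LinearMap.id := by
    ext ⟨x, hx⟩ p
    rw [LinearMap.mem_ker, Matrix.mulVecLin_apply] at hx
    obtain ⟨i, k⟩ := p
    simp only [F, G, π, ι, LinearMap.comp_apply, LinearMap.restrict_apply, LinearMap.coe_mk,
      AddHom.coe_mk, LinearMap.funLeft_apply, LinearMap.id_coe, id_eq]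
    exact (hprop x hx i k).symm
  exact LinearEquiv.finrank_eq (LinearEquiv.ofLinear F G h1 h2)

end CompanionAux

/-- The geometric multiplicities of an eigenvalue `s₀` for the companion pencil `s B - 𝖠`
and for the matrix polynomial `A(s)` coincide. -/
theorem companion_pencil_geometric_multiplicity (m ν : ℕ) (hm : 1 ≤ m) (hν : 1 ≤ ν)
    (A : Fin (ν + 1) → Matrix (Fin m) (Fin m) ℂ) (s₀ : ℂ) :
    let Apoly : Matrix (Fin m) (Fin m) ℂ := ∑ j : Fin (ν + 1), s₀ ^ (j : ℕ) • A j
    let B : Matrix (Fin ν × Fin m) (Fin ν × Fin m) ℂ := Matrix.of fun p q =>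
      if p.1 = q.1 then
        (if (p.1 : ℕ) = ν - 1 then A (Fin.last ν) p.2 q.2
         else (1 : Matrix (Fin m) (Fin m) ℂ) p.2 q.2)
      else 0
    let CA : Matrix (Fin ν × Fin m) (Fin ν × Fin m) ℂ := Matrix.of fun p q =>
      if (p.1 : ℕ) = ν - 1 then -(A (Fin.castSucc q.1) p.2 q.2)
      else if (q.1 : ℕ) = (p.1 : ℕ) + 1 then (1 : Matrix (Fin m) (Fin m) ℂ) p.2 q.2
      else 0
    Module.finrank ℂ (LinearMap.ker (s₀ • B - CA).mulVecLin)
      = Module.finrank ℂ (LinearMap.ker Apoly.mulVecLin) := by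
  exact CompanionAux.aux A s₀ hm hν
end

section
/- Let n be a natural number, ς > 0 a real number, and A : ℝ → Matrix n n ℂ a continuous matrix-valued function with A(z + ς) = A(z) for all z ∈ ℝ. Suppose Φ : ℝ → Matrix n n ℂ satisfies Φ(0) = 𝟙 and, for every z ∈ ℝ, Φ is differentiable at z with derivative A(z)·Φ(z). Let Γ be an n×n complex matrix with exp(ς·Γ) = Φ(ς). Then the matrix-valued function P defined by P(z) = Φ(z)·exp(−z·Γ) satisfies P(z + ς) = P(z) for all z ∈ ℝ and P(0) = 𝟙; consequently Φ(z) = P(z)·exp(z·Γ) is the Floquet representation of the matrizant, with P a ς-periodic matrix function. -/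
open Matrix

attribute [local instance] Matrix.normedAddCommGroup Matrix.normedSpace

lemma matrix_norm_mul_le {n : ℕ} (M N : Matrix (Fin n) (Fin n) ℂ) :
    ‖M * N‖ ≤ n * ‖M‖ * ‖N‖ := by
  have hnn : (0:ℝ) ≤ n * ‖M‖ * ‖N‖ := by positivity
  rw [Matrix.norm_le_iff hnn]
  intro i j
  calc ‖(M * N) i j‖ = ‖∑ k, M i k * N k j‖ := by rw [Matrix.mul_apply]
    _ ≤ ∑ k, ‖M i k * N k j‖ := norm_sum_le _ _
    _ ≤ ∑ _k : Fin n, ‖M‖ * ‖N‖ := by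
        refine Finset.sum_le_sum fun k _ => ?_
        rw [norm_mul]
        exact mul_le_mul (Matrix.norm_entry_le_entrywise_sup_norm M)
          (Matrix.norm_entry_le_entrywise_sup_norm N) (norm_nonneg _) (norm_nonneg _)
    _ = n * ‖M‖ * ‖N‖ := by simp [Finset.sum_const, mul_assoc]

/-- **Floquet representation**: given a matrix logarithm `Γ` of the monodromy matrix
`Φ(ς)`, the function `P z = Φ z · exp (-z Γ)` is `ς`-periodic with `P 0 = 𝟙`, so that
`Φ z = P z · exp (z Γ)`. -/
theorem floquet_representation (n : ℕ) (ς : ℝ) (hς : 0 < ς)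
    (A : ℝ → Matrix (Fin n) (Fin n) ℂ)
    (hAcont : Continuous A)
    (hAper : ∀ z : ℝ, A (z + ς) = A z)
    (Φ : ℝ → Matrix (Fin n) (Fin n) ℂ)
    (hΦ0 : Φ 0 = 1)
    (hΦ : ∀ z : ℝ, HasDerivAt Φ (A z * Φ z) z)
    (Γ : Matrix (Fin n) (Fin n) ℂ)
    (hΓ : NormedSpace.exp ((ς : ℂ) • Γ) = Φ ς) :
    let P : ℝ → Matrix (Fin n) (Fin n) ℂ :=
      fun z => Φ z * NormedSpace.exp ((-(z : ℂ)) • Γ)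
    (∀ z : ℝ, P (z + ς) = P z) ∧ P 0 = 1 ∧
      ∀ z : ℝ, Φ z = P z * NormedSpace.exp ((z : ℂ) • Γ) := by
  intro P
  have hper : Function.Periodic A ς := hAper
  -- A is globally bounded in norm
  obtain ⟨C₀, hC₀⟩ := (isCompact_Icc (a := (0:ℝ)) (b := ς)).exists_bound_of_continuousOn
    hAcont.continuousOn
  set C : ℝ := max C₀ 0 with hCdef
  have hC : ∀ t : ℝ, ‖A t‖ ≤ C := by
    intro t
    have hmem : t - ⌊t / ς⌋ * ς ∈ Set.Icc (0:ℝ) ς := by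
      constructor
      · have := Int.sub_floor_div_mul_nonneg t hς
        linarith
      · have := Int.sub_floor_div_mul_lt t hς
        linarith
    have := hC₀ _ hmem
    rw [hper.sub_int_mul_eq] at this
    exact this.trans (le_max_left _ _)
  have hCnn : (0:ℝ) ≤ n * C := by positivity
  set K : NNReal := ⟨n * C, hCnn⟩ with hKdef
  have hlip : ∀ t : ℝ,
      LipschitzWith K (fun x : Matrix (Fin n) (Fin n) ℂ => A t * x) := by
    intro t
    refine LipschitzWith.of_dist_le_mul fun x y => ?_
    rw [dist_eq_norm, ← mul_sub, dist_eq_norm]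
    calc ‖A t * (x - y)‖ ≤ n * ‖A t‖ * ‖x - y‖ := matrix_norm_mul_le _ _
      _ ≤ (K : ℝ) * ‖x - y‖ := by
          refine mul_le_mul_of_nonneg_right ?_ (norm_nonneg _)
          have : (K : ℝ) = n * C := rfl
          rw [this]
          exact mul_le_mul_of_nonneg_left (hC t) (by positivity)
  -- the semigroup property Φ (z + ς) = Φ z * Φ ς by uniqueness of ODE solutions
  have hsemi : ∀ z : ℝ, Φ (z + ς) = Φ z * Φ ς := by
    intro z
    set R : Matrix (Fin n) (Fin n) ℂ →L[ℂ] Matrix (Fin n) (Fin n) ℂ :=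
      LinearMap.toContinuousLinearMap (LinearMap.mulRight ℂ (Φ ς)) with hRdef
    have hR : ∀ x, R x = x * Φ ς := fun x => rfl
    have hΦc : Continuous Φ := continuous_iff_continuousAt.mpr fun t => (hΦ t).continuousAt
    have key : Set.EqOn (fun t => Φ (t + ς)) (fun t => Φ t * Φ ς)
        (Set.Icc (-(|z| + 1)) (|z| + 1)) :=
      ODE_solution_unique_of_mem_Icc
        (v := fun t x => A t * x) (s := fun _ => Set.univ) (t₀ := 0)
        (fun t _ => (hlip t).lipschitzOnWith)
        ⟨by linarith [abs_nonneg z], by linarith [abs_nonneg z]⟩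
        ((hΦc.comp (continuous_id.add continuous_const)).continuousOn)
        (fun t _ => by
          have h1 : HasDerivAt (fun u : ℝ => u + ς) 1 t := (hasDerivAt_id t).add_const ς
          simpa [Function.comp_def, hAper t] using (hΦ (t + ς)).scomp t h1)
        (fun _ _ => trivial)
        ((R.continuous.comp hΦc).continuousOn)
        (fun t _ => by rw [← mul_assoc]; exact (R.restrictScalars ℝ).hasFDerivAt.comp_hasDerivAt t (hΦ t))
        (fun _ _ => trivial)
        (by simp [hΦ0])
    have hz : z ∈ Set.Icc (-(|z| + 1)) (|z| + 1) := by
      constructor <;> [linarith [neg_abs_le z]; linarith [le_abs_self z]]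
    exact key hz
  -- exp facts
  have hcomm : ∀ a b : ℂ, Commute (a • Γ) (b • Γ) :=
    fun a b => ((Commute.refl Γ).smul_left a).smul_right b
  have hinv1 : ∀ a : ℂ, NormedSpace.exp (a • Γ) * NormedSpace.exp ((-a) • Γ) = 1 := by
    intro a
    have h := Matrix.exp_add_of_commute (a • Γ) ((-a) • Γ) (hcomm a (-a))
    have h2 : NormedSpace.exp (a • Γ + (-a) • Γ) = 1 := by
      rw [← add_smul]; simp
    exact h.symm.trans h2
  have hΦςinv : Φ ς * NormedSpace.exp ((-(ς:ℂ)) • Γ) = 1 := by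
    rw [← hΓ]; exact hinv1 ς
  refine ⟨?_, ?_, ?_⟩
  · intro z
    show Φ (z + ς) * NormedSpace.exp ((-((z + ς : ℝ) : ℂ)) • Γ)
        = Φ z * NormedSpace.exp ((-(z:ℂ)) • Γ)
    have hsplit : NormedSpace.exp ((-((z + ς : ℝ) : ℂ)) • Γ)
        = NormedSpace.exp ((-(ς:ℂ)) • Γ) * NormedSpace.exp ((-(z:ℂ)) • Γ) := by
      have h := Matrix.exp_add_of_commute ((-(ς:ℂ)) • Γ) ((-(z:ℂ)) • Γ)
        (hcomm (-(ς:ℂ)) (-(z:ℂ)))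
      have h2 : (-((z + ς : ℝ) : ℂ)) • Γ = (-(ς:ℂ)) • Γ + (-(z:ℂ)) • Γ := by
        rw [← add_smul]; push_cast; ring_nf
      rw [h2]; exact h
    rw [hsemi z, hsplit, mul_assoc, ← mul_assoc (Φ ς), hΦςinv, one_mul]
  · show Φ 0 * NormedSpace.exp ((-((0:ℝ):ℂ)) • Γ) = 1
    simp [hΦ0]
  · intro z
    show Φ z = Φ z * NormedSpace.exp ((-(z:ℂ)) • Γ) * NormedSpace.exp ((z:ℂ) • Γ)
    rw [mul_assoc]
    have h := Matrix.exp_add_of_commute ((-(z:ℂ)) • Γ) ((z:ℂ) • Γ)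
      (hcomm (-(z:ℂ)) (z:ℂ))
    have h2 : NormedSpace.exp ((-(z:ℂ)) • Γ + (z:ℂ) • Γ) = 1 := by
      rw [← add_smul]; simp
    rw [h.symm.trans h2, mul_one]
end

section
/- Let a ∈ ℂ, b ∈ ℝ, and let S ∈ ℂ with |S| = 1. Define P(S) = S⁴ + a·S³ + b·S² + conj(a)·S + 1 and its derivative P′(S) = 4S³ + 3a·S² + 2b·S + conj(a). Then P(S) = 0 and P′(S) = 0 hold simultaneously if and only if Re(S² + a·S + b/2) = 0 and Im(2S² + a·S) = 0. -/
/-- A root `S` on the unit circle of the special quartic `S⁴ + aS³ + bS² + āS + 1`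
(`a ∈ ℂ`, `b ∈ ℝ`) is degenerate (both the polynomial and its derivative vanish) iff
`Re (S² + aS + b/2) = 0` and `Im (2S² + aS) = 0`. -/
theorem quartic_epd_on_unit_circle (a : ℂ) (b : ℝ) (S : ℂ) (hS : ‖S‖ = 1) :
    (S ^ 4 + a * S ^ 3 + (b : ℂ) * S ^ 2 + (starRingEnd ℂ a) * S + 1 = 0 ∧
       4 * S ^ 3 + 3 * a * S ^ 2 + 2 * (b : ℂ) * S + starRingEnd ℂ a = 0) ↔
      ((S ^ 2 + a * S + (b : ℂ) / 2).re = 0 ∧ (2 * S ^ 2 + a * S).im = 0) := by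
  have hS0 : S ≠ 0 := by
    intro h
    rw [h] at hS; simp at hS
  have hc : S * starRingEnd ℂ S = 1 := by
    rw [Complex.mul_conj]
    norm_cast
    rw [← Complex.sq_norm, hS]; norm_num
  have key1 : S ^ 4 + a * S ^ 3 + (b : ℂ) * S ^ 2 + (starRingEnd ℂ a) * S + 1
      = S ^ 2 * ((2 * (S ^ 2 + a * S + (b : ℂ) / 2).re : ℝ) : ℂ) := by
    rw [← Complex.add_conj]
    simp only [map_add, map_mul, map_pow, map_div₀, Complex.conj_ofReal, map_ofNat]
    linear_combination (-(starRingEnd ℂ a * S + 1 + S * starRingEnd ℂ S)) * hc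
  have key2 : 4 * S ^ 3 + 3 * a * S ^ 2 + 2 * (b : ℂ) * S + starRingEnd ℂ a
      = 2 * starRingEnd ℂ S *
          (S ^ 4 + a * S ^ 3 + (b : ℂ) * S ^ 2 + (starRingEnd ℂ a) * S + 1)
        + S * (((2 * (2 * S ^ 2 + a * S).im : ℝ) : ℂ) * Complex.I) := by
    rw [← Complex.sub_conj]
    simp only [map_add, map_mul, map_pow, map_ofNat]
    linear_combination (-(2 * S ^ 3 + 2 * a * S ^ 2 + 2 * (b : ℂ) * S
        + starRingEnd ℂ a - 2 * starRingEnd ℂ S)) * hc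
  constructor
  · rintro ⟨h1, h2⟩
    have hre : (S ^ 2 + a * S + (b : ℂ) / 2).re = 0 := by
      rw [h1] at key1
      rcases mul_eq_zero.mp key1.symm with h | h
      · exact absurd (pow_eq_zero_iff (by norm_num) |>.mp h) hS0
      · have : (2 * (S ^ 2 + a * S + (b : ℂ) / 2).re : ℝ) = 0 := by exact_mod_cast h
        linarith
    refine ⟨hre, ?_⟩
    rw [h1, h2, mul_zero, zero_add] at key2
    rcases mul_eq_zero.mp key2.symm with h | h
    · exact absurd h hS0
    · rcases mul_eq_zero.mp h with h | h
      · have : (2 * (2 * S ^ 2 + a * S).im : ℝ) = 0 := by exact_mod_cast h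
        linarith
      · exact absurd h Complex.I_ne_zero
  · rintro ⟨h1, h2⟩
    have e1 : S ^ 4 + a * S ^ 3 + (b : ℂ) * S ^ 2 + (starRingEnd ℂ a) * S + 1 = 0 := by
      rw [key1, h1]; norm_num
    refine ⟨e1, ?_⟩
    rw [key2, e1, h2]; norm_num
end
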